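/- Let C be a separable Frobenius monoid in a monoidal category V, let X be a right C-comodule with coaction δᵣ : X ⟶ X ⊗ C and let Y be a left C-comodule with coaction δₗ : Y ⟶ C ⊗ Y. Consider the parallel pair f₁ := (δᵣ ⊗ 1_Y) : X ⊗ Y ⟶ X ⊗ C ⊗ Y and f₂ := (1_X ⊗ δₗ) : X ⊗ Y ⟶ X ⊗ C ⊗ Y (associators suppressed), and define d := (1_X ⊗ ε ⊗ 1_Y) ∘ (1_X ⊗ μ ⊗ 1_Y) ∘ (1_X ⊗ 1_C ⊗ δₗ) : X ⊗ C ⊗ Y ⟶ X ⊗ Y and a := (1_X ⊗ ε ⊗ 1_Y) ∘ (1_X ⊗ μ ⊗ 1_Y) ∘ (δᵣ ⊗ δₗ) : X ⊗ Y ⟶ X ⊗ Y. Then: (i) d ∘ f₂ = 1_{X⊗Y} and d ∘ f₁ = a; (ii) a is idempotent and f₁ ∘ a = f₂ ∘ a; (iii) for every splitting of a (morphisms p : X ⊗ Y ⟶ W, i : W ⟶ X ⊗ Y with i ∘ p = a and p ∘ i = 1_W), the morphism i : W ⟶ X ⊗ Y is an equalizer of the pair (f₁, f₂). Thus the cotensor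 product X ⊗_C Y is the splitting (X ⊗ Y, a) of the idempotent a. -/

import Mathlib

open CategoryTheory MonoidalCategory CategoryTheory.Limits

/-- A separable Frobenius monoid in a monoidal category `V`. -/
structure SeparableFrobenius (V : Type*) [Category V] [MonoidalCategory V] where
  C : V
  mul : C ⊗ C ⟶ C
  one : 𝟙_ V ⟶ C
  comul : C ⟶ C ⊗ C
  counit : C ⟶ 𝟙_ V
  mul_assoc : (mul ▷ C) ≫ mul = (α_ C C C).hom ≫ (C ◁ mul) ≫ mul
  one_mul : (one ▷ C) ≫ mul = (λ_ C).hom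
  mul_one : (C ◁ one) ≫ mul = (ρ_ C).hom
  comul_coassoc : comul ≫ (C ◁ comul) = comul ≫ (comul ▷ C) ≫ (α_ C C C).hom
  counit_comul : comul ≫ (counit ▷ C) = (λ_ C).inv
  comul_counit : comul ≫ (C ◁ counit) = (ρ_ C).inv
  frobenius₁ : (comul ▷ C) ≫ (α_ C C C).hom ≫ (C ◁ mul) = mul ≫ comul
  frobenius₂ : (C ◁ comul) ≫ (α_ C C C).inv ≫ (mul ▷ C) = mul ≫ comul
  separable : comul ≫ mul = 𝟙 C

/-- For a separable Frobenius monoid `C`, a right `C`-comodule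
`(X, δᵣ)` and a left `C`-comodule `(Y, δₗ)`, the parallel pair
`f₁ = δᵣ ⊗ 1`, `f₂ = 1 ⊗ δₗ : X ⊗ Y ⟶ X ⊗ (C ⊗ Y)` is cosplit by
`d = (1 ⊗ ε ⊗ 1)(1 ⊗ μ ⊗ 1)(1 ⊗ 1 ⊗ δₗ)`; the induced idempotent
`a = (1 ⊗ ε ⊗ 1)(1 ⊗ μ ⊗ 1)(δᵣ ⊗ δₗ)` satisfies `d ∘ f₂ = 1`, `d ∘ f₁ = a`,
`f₁ ∘ a = f₂ ∘ a`, and any splitting of `a` is an equalizer of `(f₁, f₂)`,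
i.e. computes the cotensor product `X ⊗_C Y`. -/
theorem cotensor_as_splitting_of_idempotent
    {V : Type*} [Category V] [MonoidalCategory V] (F : SeparableFrobenius V)
    (X : V) (δr : X ⟶ X ⊗ F.C)
    (hXcoassoc : δr ≫ (X ◁ F.comul) = δr ≫ (δr ▷ F.C) ≫ (α_ X F.C F.C).hom)
    (hXcounit : δr ≫ (X ◁ F.counit) = (ρ_ X).inv)
    (Y : V) (δl : Y ⟶ F.C ⊗ Y)
    (hYcoassoc : δl ≫ (F.C ◁ δl) = δl ≫ (F.comul ▷ Y) ≫ (α_ F.C F.C Y).hom)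
    (hYcounit : δl ≫ (F.counit ▷ Y) = (λ_ Y).inv) :
    letI f₁ : X ⊗ Y ⟶ X ⊗ (F.C ⊗ Y) := (δr ▷ Y) ≫ (α_ X F.C Y).hom
    letI f₂ : X ⊗ Y ⟶ X ⊗ (F.C ⊗ Y) := X ◁ δl
    letI d : X ⊗ (F.C ⊗ Y) ⟶ X ⊗ Y :=
      (X ◁ (F.C ◁ δl)) ≫ (X ◁ (α_ F.C F.C Y).inv) ≫ (X ◁ (F.mul ▷ Y)) ≫
        (X ◁ (F.counit ▷ Y)) ≫ (X ◁ (λ_ Y).hom)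
    letI a : X ⊗ Y ⟶ X ⊗ Y :=
      (δr ⊗ₘ δl) ≫ (α_ X F.C (F.C ⊗ Y)).hom ≫ (X ◁ (α_ F.C F.C Y).inv) ≫
        (X ◁ (F.mul ▷ Y)) ≫ (X ◁ (F.counit ▷ Y)) ≫ (X ◁ (λ_ Y).hom)
    (f₂ ≫ d = 𝟙 (X ⊗ Y)) ∧
    (f₁ ≫ d = a) ∧
    (a ≫ a = a) ∧
    (a ≫ f₁ = a ≫ f₂) ∧
    ∀ (W : V) (p : X ⊗ Y ⟶ W) (i : W ⟶ X ⊗ Y),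
      p ≫ i = a → i ≫ p = 𝟙 W →
      ∀ (w : i ≫ f₁ = i ≫ f₂), Nonempty (IsLimit (Fork.ofι i w)) := by
  -- Frobenius consequences
  have hg₁ : (F.comul ▷ F.C) ≫ (α_ F.C F.C F.C).hom ≫ (F.C ◁ F.mul) ≫
      (F.C ◁ F.counit) ≫ (ρ_ F.C).hom = F.mul := by
    slice_lhs 1 3 => rw [F.frobenius₁]
    slice_lhs 2 3 => rw [F.comul_counit]
    simp
  have hg₂ : (F.C ◁ F.comul) ≫ (α_ F.C F.C F.C).inv ≫ (F.mul ▷ F.C) ≫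
      (F.counit ▷ F.C) ≫ (λ_ F.C).hom = F.mul := by
    slice_lhs 1 3 => rw [F.frobenius₂]
    slice_lhs 2 3 => rw [F.counit_comul]
    simp
  have hY1 : δl ≫ (F.C ◁ δl) ≫ (α_ F.C F.C Y).inv ≫ (F.mul ▷ Y) ≫
      (F.counit ▷ Y) ≫ (λ_ Y).hom = 𝟙 Y := by
    rw [reassoc_of% hYcoassoc]
    simp only [Iso.hom_inv_id_assoc]
    slice_lhs 2 3 => rw [← comp_whiskerRight, F.separable]
    simp [reassoc_of% hYcounit]
  have hX' : δr ≫ (δr ▷ F.C) = δr ≫ (X ◁ F.comul) ≫ (α_ X F.C F.C).inv := by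
    have h := reassoc_of% hXcoassoc
    rw [h]; simp
  -- part 1
  have hP1 : (X ◁ δl) ≫ (X ◁ (F.C ◁ δl)) ≫ (X ◁ (α_ F.C F.C Y).inv) ≫
      (X ◁ (F.mul ▷ Y)) ≫ (X ◁ (F.counit ▷ Y)) ≫ (X ◁ (λ_ Y).hom) = 𝟙 (X ⊗ Y) := by
    calc (X ◁ δl) ≫ (X ◁ (F.C ◁ δl)) ≫ (X ◁ (α_ F.C F.C Y).inv) ≫ (X ◁ (F.mul ▷ Y)) ≫
        (X ◁ (F.counit ▷ Y)) ≫ (X ◁ (λ_ Y).hom)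
        = X ◁ (δl ≫ (F.C ◁ δl) ≫ (α_ F.C F.C Y).inv ≫ (F.mul ▷ Y) ≫
            (F.counit ▷ Y) ≫ (λ_ Y).hom) := by
          simp only [MonoidalCategory.whiskerLeft_comp, Category.assoc]
      _ = 𝟙 (X ⊗ Y) := by rw [hY1, MonoidalCategory.whiskerLeft_id]
  -- part 2
  have hP2 : ((δr ▷ Y) ≫ (α_ X F.C Y).hom) ≫ (X ◁ (F.C ◁ δl)) ≫ (X ◁ (α_ F.C F.C Y).inv) ≫
      (X ◁ (F.mul ▷ Y)) ≫ (X ◁ (F.counit ▷ Y)) ≫ (X ◁ (λ_ Y).hom)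
      = (δr ⊗ₘ δl) ≫ (α_ X F.C (F.C ⊗ Y)).hom ≫ (X ◁ (α_ F.C F.C Y).inv) ≫
        (X ◁ (F.mul ▷ Y)) ≫ (X ◁ (F.counit ▷ Y)) ≫ (X ◁ (λ_ Y).hom) := by
    rw [MonoidalCategory.tensorHom_def]
    monoidal
  -- `a` in convenient form
  have ha : (δr ⊗ₘ δl) ≫ (α_ X F.C (F.C ⊗ Y)).hom ≫ (X ◁ (α_ F.C F.C Y).inv) ≫
      (X ◁ (F.mul ▷ Y)) ≫ (X ◁ (F.counit ▷ Y)) ≫ (X ◁ (λ_ Y).hom)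
      = (δr ▷ Y) ≫ (α_ X F.C Y).hom ≫ (X ◁ ((F.C ◁ δl) ≫ (α_ F.C F.C Y).inv ≫
          (F.mul ▷ Y) ≫ (F.counit ▷ Y) ≫ (λ_ Y).hom)) := by
    rw [MonoidalCategory.tensorHom_def]
    monoidal
  -- structural naturality facts
  have n1 : ((α_ X F.C F.C).inv ▷ Y) ≫ (α_ (X ⊗ F.C) F.C Y).hom ≫
        ((X ⊗ F.C) ◁ (F.C ◁ δl))
      = ((X ⊗ (F.C ⊗ F.C)) ◁ δl) ≫ ((α_ X F.C F.C).inv ▷ (F.C ⊗ Y)) ≫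
        (α_ (X ⊗ F.C) F.C (F.C ⊗ Y)).hom := by monoidal
  have n3 : ((X ◁ F.comul) ▷ (F.C ⊗ Y)) ≫ ((α_ X F.C F.C).inv ▷ (F.C ⊗ Y)) ≫
        (α_ (X ⊗ F.C) F.C (F.C ⊗ Y)).hom ≫ ((X ⊗ F.C) ◁ (α_ F.C F.C Y).inv) ≫
        ((X ⊗ F.C) ◁ (F.mul ▷ Y)) ≫ ((X ⊗ F.C) ◁ (F.counit ▷ Y)) ≫
        ((X ⊗ F.C) ◁ (λ_ Y).hom) ≫ (α_ X F.C Y).hom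
      = (α_ X F.C (F.C ⊗ Y)).hom ≫ (X ◁ (α_ F.C F.C Y).inv) ≫
        (X ◁ (((F.comul ▷ F.C) ≫ (α_ F.C F.C F.C).hom ≫ (F.C ◁ F.mul) ≫
          (F.C ◁ F.counit) ≫ (ρ_ F.C).hom) ▷ Y)) := by monoidal
  -- a ≫ f₁
  have hA : ((δr ⊗ₘ δl) ≫ (α_ X F.C (F.C ⊗ Y)).hom ≫ (X ◁ (α_ F.C F.C Y).inv) ≫
      (X ◁ (F.mul ▷ Y)) ≫ (X ◁ (F.counit ▷ Y)) ≫ (X ◁ (λ_ Y).hom)) ≫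
      (δr ▷ Y) ≫ (α_ X F.C Y).hom
      = (X ◁ δl) ≫ (δr ▷ (F.C ⊗ Y)) ≫ (α_ X F.C (F.C ⊗ Y)).hom ≫
        (X ◁ (α_ F.C F.C Y).inv) ≫ (X ◁ (F.mul ▷ Y)) := by
    rw [ha]
    simp only [Category.assoc]
    rw [whisker_exchange_assoc]
    rw [← associator_naturality_left_assoc]
    rw [← comp_whiskerRight_assoc, hX']
    simp only [comp_whiskerRight, MonoidalCategory.whiskerLeft_comp, Category.assoc]
    slice_lhs 3 5 => rw [n1]
    slice_lhs 2 3 => rw [← whisker_exchange]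
    slice_lhs 1 2 => rw [← whisker_exchange]
    simp only [Category.assoc]
    slice_lhs 3 10 => rw [n3]
    rw [hg₁]
  -- the inner computation for a ≫ f₂
  have n2 : (α_ F.C F.C Y).inv ≫ ((F.C ⊗ F.C) ◁ δl)
      = (F.C ◁ (F.C ◁ δl)) ≫ (α_ F.C F.C (F.C ⊗ Y)).inv := by monoidal
  have hBin : ((F.C ◁ δl) ≫ (α_ F.C F.C Y).inv ≫ (F.mul ▷ Y) ≫ (F.counit ▷ Y) ≫
      (λ_ Y).hom) ≫ δl = (F.C ◁ δl) ≫ (α_ F.C F.C Y).inv ≫ (F.mul ▷ Y) := by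
    simp only [Category.assoc]
    rw [← leftUnitor_naturality]
    slice_lhs 4 5 => rw [← whisker_exchange]
    slice_lhs 3 4 => rw [← whisker_exchange]
    slice_lhs 2 3 => rw [n2]
    slice_lhs 1 2 =>
      rw [← MonoidalCategory.whiskerLeft_comp, hYcoassoc, MonoidalCategory.whiskerLeft_comp,
        MonoidalCategory.whiskerLeft_comp]
    simp only [Category.assoc]
    have n4 : (F.C ◁ (F.comul ▷ Y)) ≫ (F.C ◁ (α_ F.C F.C Y).hom) ≫
        (α_ F.C F.C (F.C ⊗ Y)).inv ≫ (F.mul ▷ (F.C ⊗ Y)) ≫ (F.counit ▷ (F.C ⊗ Y)) ≫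
        (λ_ (F.C ⊗ Y)).hom
        = (α_ F.C F.C Y).inv ≫ (((F.C ◁ F.comul) ≫ (α_ F.C F.C F.C).inv ≫ (F.mul ▷ F.C) ≫
            (F.counit ▷ F.C) ≫ (λ_ F.C).hom) ▷ Y) := by monoidal
    slice_lhs 2 7 => rw [n4]
    rw [hg₂]
  -- a ≫ f₂
  have hB : ((δr ⊗ₘ δl) ≫ (α_ X F.C (F.C ⊗ Y)).hom ≫ (X ◁ (α_ F.C F.C Y).inv) ≫
      (X ◁ (F.mul ▷ Y)) ≫ (X ◁ (F.counit ▷ Y)) ≫ (X ◁ (λ_ Y).hom)) ≫ (X ◁ δl)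
      = (δr ▷ Y) ≫ (α_ X F.C Y).hom ≫ (X ◁ (F.C ◁ δl)) ≫
        (X ◁ (α_ F.C F.C Y).inv) ≫ (X ◁ (F.mul ▷ Y)) := by
    calc ((δr ⊗ₘ δl) ≫ (α_ X F.C (F.C ⊗ Y)).hom ≫ (X ◁ (α_ F.C F.C Y).inv) ≫
        (X ◁ (F.mul ▷ Y)) ≫ (X ◁ (F.counit ▷ Y)) ≫ (X ◁ (λ_ Y).hom)) ≫ (X ◁ δl)
        = (δr ▷ Y) ≫ (α_ X F.C Y).hom ≫
            (X ◁ (((F.C ◁ δl) ≫ (α_ F.C F.C Y).inv ≫ (F.mul ▷ Y) ≫ (F.counit ▷ Y) ≫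
              (λ_ Y).hom) ≫ δl)) := by
          rw [ha]
          simp only [MonoidalCategory.whiskerLeft_comp, Category.assoc]
      _ = (δr ▷ Y) ≫ (α_ X F.C Y).hom ≫
            (X ◁ ((F.C ◁ δl) ≫ (α_ F.C F.C Y).inv ≫ (F.mul ▷ Y))) := by rw [hBin]
      _ = (δr ▷ Y) ≫ (α_ X F.C Y).hom ≫ (X ◁ (F.C ◁ δl)) ≫
            (X ◁ (α_ F.C F.C Y).inv) ≫ (X ◁ (F.mul ▷ Y)) := by
          simp only [MonoidalCategory.whiskerLeft_comp, Category.assoc]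
  -- part 4
  have hP4 : ((δr ⊗ₘ δl) ≫ (α_ X F.C (F.C ⊗ Y)).hom ≫ (X ◁ (α_ F.C F.C Y).inv) ≫
      (X ◁ (F.mul ▷ Y)) ≫ (X ◁ (F.counit ▷ Y)) ≫ (X ◁ (λ_ Y).hom)) ≫
      (δr ▷ Y) ≫ (α_ X F.C Y).hom
      = ((δr ⊗ₘ δl) ≫ (α_ X F.C (F.C ⊗ Y)).hom ≫ (X ◁ (α_ F.C F.C Y).inv) ≫
        (X ◁ (F.mul ▷ Y)) ≫ (X ◁ (F.counit ▷ Y)) ≫ (X ◁ (λ_ Y).hom)) ≫ (X ◁ δl) := by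
    rw [hA, hB, whisker_exchange_assoc]
    monoidal
  -- parts 3 and 5, abstractly
  have main : ∀ {Z T : V} (ff₁ ff₂ : Z ⟶ T) (dd : T ⟶ Z) (aa : Z ⟶ Z),
      ff₂ ≫ dd = 𝟙 Z → ff₁ ≫ dd = aa → aa ≫ ff₁ = aa ≫ ff₂ →
      (aa ≫ aa = aa) ∧ (∀ (W : V) (p : Z ⟶ W) (i : W ⟶ Z), p ≫ i = aa → i ≫ p = 𝟙 W →
        ∀ (w : i ≫ ff₁ = i ≫ ff₂), Nonempty (IsLimit (Fork.ofι i w))) := by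
    intro Z T ff₁ ff₂ dd aa h1 h2 h4
    have key : ∀ s : Fork ff₁ ff₂, s.ι ≫ aa = s.ι := by
      intro s
      rw [← h2, ← Category.assoc, s.condition, Category.assoc, h1]; simp
    constructor
    · calc aa ≫ aa = aa ≫ ff₁ ≫ dd := by rw [h2]
        _ = (aa ≫ ff₁) ≫ dd := by rw [Category.assoc]
        _ = (aa ≫ ff₂) ≫ dd := by rw [h4]
        _ = aa ≫ ff₂ ≫ dd := by rw [Category.assoc]
        _ = aa := by rw [h1]; simp
    · intro W p i hpi hip w
      refine ⟨Fork.IsLimit.mk _ (fun s => s.ι ≫ p) (fun s => ?_) (fun s m hm => ?_)⟩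
      · have : s.ι ≫ p ≫ i = s.ι := by rw [hpi, key s]
        simpa [Category.assoc] using this
      · have hm' : m ≫ i = s.ι := by simpa using hm
        calc m = m ≫ 𝟙 W := (Category.comp_id m).symm
          _ = m ≫ i ≫ p := by rw [hip]
          _ = (m ≫ i) ≫ p := by rw [← Category.assoc]
          _ = s.ι ≫ p := by rw [hm']
  obtain ⟨hP3, hP5⟩ := main _ _ _ _ hP1 hP2 hP4
  exact ⟨hP1, hP2, hP3, hP4, hP5⟩
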